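/- Let k be a field, let g_1,…,g_r ∈ k[x_1,…,x_n], let p ∈ kⁿ with g_l(p) = 0 for all l, and let A = k[x_1,…,x_n]/⟨g_1,…,g_r⟩. Suppose the localization A_{m_p} is a regular local ring of Krull dimension n − r, and suppose S ⊆ {1,…,n} is a set of r column indices such that the r × r minor of the Jacobian matrix ((∂g_l/∂x_j)(p)) on the columns in S is nonzero. Then the images of the n − r elements {x_j − p_j : j ∉ S} generate the maximal ideal of A_{m_p}; that is, they form a regular system of parameters of the local ring of W = V(g_1,…,g_r) at p. -/

import Mathlib

open MvPolynomial

/-- The maximal ideal of `k[x_1,…,x_n]` of polynomials vanishing at the point `p`,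
i.e. the kernel of the evaluation map at `p` (equivalently `⟨x_1 - p_1, …, x_n - p_n⟩`). -/
noncomputable def mP {k : Type} [Field k] {n : ℕ} (p : Fin n → k) :
    Ideal (MvPolynomial (Fin n) k) :=
  RingHom.ker (eval p)

theorem mP_isMaximal {k : Type} [Field k] {n : ℕ} (p : Fin n → k) : (mP p).IsMaximal :=
  RingHom.ker_isMaximal_of_surjective _ (fun x => ⟨C x, eval_C x⟩)

/-- For `I ≤ m_p`, the ideal `m_p/I` of the quotient ring is maximal. -/
theorem qP_isMaximal {k : Type} [Field k] {n : ℕ} (p : Fin n → k)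
    (I : Ideal (MvPolynomial (Fin n) k)) (hI : I ≤ mP p) :
    (Ideal.map (Ideal.Quotient.mk I) (mP p)).IsMaximal := by
  rcases Ideal.map_eq_top_or_isMaximal_of_surjective (Ideal.Quotient.mk I)
      Ideal.Quotient.mk_surjective (mP_isMaximal p) with h | h
  · exfalso
    have h2 := congrArg (Ideal.comap (Ideal.Quotient.mk I)) h
    rw [Ideal.comap_map_of_surjective _ Ideal.Quotient.mk_surjective, Ideal.comap_top] at h2
    have hk : Ideal.comap (Ideal.Quotient.mk I) ⊥ = I := by
      simpa [RingHom.ker] using Ideal.mk_ker (I := I)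
    rw [hk, sup_eq_left.mpr hI] at h2
    exact (mP_isMaximal p).ne_top h2
  · exact h

/-- A local ring is regular if its Krull dimension equals the dimension of
its cotangent space `m/m²` over the residue field. -/
def IsRegularLocal (R : Type) [CommRing R] [IsLocalRing R] : Prop :=
  ringKrullDim R =
    (Module.finrank (IsLocalRing.ResidueField R) (IsLocalRing.CotangentSpace R) : WithBot ℕ∞)

lemma X_sub_C_mem_mP {k : Type} [Field k] {n : ℕ} (p : Fin n → k) (i : Fin n) :
    X i - C (p i) ∈ mP p := by
  simp [mP, RingHom.mem_ker]

lemma sub_C_eval_mem_span {k : Type} [Field k] {n : ℕ} (p : Fin n → k)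
    (f : MvPolynomial (Fin n) k) :
    f - C (eval p f) ∈ Ideal.span (Set.range fun i : Fin n => X i - C (p i)) := by
  induction f using MvPolynomial.induction_on with
  | C a => simp
  | add f g hf hg =>
    have : f + g - C (eval p (f + g)) = (f - C (eval p f)) + (g - C (eval p g)) := by
      rw [map_add, map_add]; ring
    rw [this]; exact add_mem hf hg
  | mul_X f j hf =>
    have : f * X j - C (eval p (f * X j)) =
        f * (X j - C (p j)) + C (p j) * (f - C (eval p f)) := by
      rw [map_mul, eval_X, map_mul]; ring
    rw [this]
    exact add_mem (Ideal.mul_mem_left _ _ (Ideal.subset_span ⟨j, rfl⟩))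
      (Ideal.mul_mem_left _ _ hf)

lemma mP_eq_span {k : Type} [Field k] {n : ℕ} (p : Fin n → k) :
    mP p = Ideal.span (Set.range fun i : Fin n => X i - C (p i)) := by
  apply le_antisymm
  · intro f hf
    have h0 : eval p f = 0 := hf
    have := sub_C_eval_mem_span p f
    rwa [h0, map_zero, sub_zero] at this
  · rw [Ideal.span_le]
    rintro _ ⟨i, rfl⟩
    exact X_sub_C_mem_mP p i

lemma taylor_mem_sq {k : Type} [Field k] {n : ℕ} (p : Fin n → k)
    (f : MvPolynomial (Fin n) k) :
    f - C (eval p f) - ∑ i : Fin n, C (eval p (pderiv i f)) * (X i - C (p i)) ∈ (mP p) ^ 2 := by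
  induction f using MvPolynomial.induction_on with
  | C a => simp
  | add f g hf hg =>
    have : f + g - C (eval p (f + g)) -
        ∑ i : Fin n, C (eval p (pderiv i (f + g))) * (X i - C (p i)) =
        (f - C (eval p f) - ∑ i : Fin n, C (eval p (pderiv i f)) * (X i - C (p i))) +
        (g - C (eval p g) - ∑ i : Fin n, C (eval p (pderiv i g)) * (X i - C (p i))) := by
      simp only [map_add, add_mul, Finset.sum_add_distrib]
      ring
    rw [this]; exact add_mem hf hg
  | mul_X f j hf =>
    have hsum : ∑ i : Fin n, C (eval p (pderiv i (f * X j))) * (X i - C (p i)) =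
        C (p j) * (∑ i : Fin n, C (eval p (pderiv i f)) * (X i - C (p i))) +
          C (eval p f) * (X j - C (p j)) := by
      classical
      simp only [pderiv_mul, pderiv_X, map_add, map_mul, eval_X, Pi.single_apply,
        apply_ite (eval p), map_one (eval p), map_zero (eval p), apply_ite (C (σ := Fin n) (R := k)),
        map_one, map_zero, add_mul, mul_ite, ite_mul, mul_one, mul_zero, zero_mul,
        Finset.sum_add_distrib, Finset.sum_ite_eq, Finset.mem_univ, if_true, Finset.mul_sum]
      congr 1
      exact Finset.sum_congr rfl fun i _ => by ring
    have key : f * X j - C (eval p (f * X j)) -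
        ∑ i : Fin n, C (eval p (pderiv i (f * X j))) * (X i - C (p i)) =
        (f - C (eval p f) - ∑ i : Fin n, C (eval p (pderiv i f)) * (X i - C (p i))) * X j +
          (∑ i : Fin n, C (eval p (pderiv i f)) * (X i - C (p i))) * (X j - C (p j)) := by
      rw [hsum, map_mul, eval_X, map_mul]; ring
    rw [key]
    refine add_mem (Ideal.mul_mem_right _ _ hf) ?_
    rw [pow_two]
    exact Ideal.mul_mem_mul
      (Ideal.sum_mem _ fun i _ => Ideal.mul_mem_left _ _ (X_sub_C_mem_mP p i))
      (X_sub_C_mem_mP p j)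

lemma span_compl_eq_maximalIdeal {k : Type} [Field k] {n r : ℕ}
    (g : Fin r → MvPolynomial (Fin n) k) (p : Fin n → k)
    (h0 : ∀ l, eval p (g l) = 0) (e : Fin r ↪ Fin n)
    (hminor : (Matrix.of fun l l' : Fin r => eval p (pderiv (e l') (g l))).det ≠ 0)
    {R' : Type} [CommRing R'] [IsLocalRing R'] [IsNoetherianRing R']
    (ψ : MvPolynomial (Fin n) k →+* R')
    (hψg : ∀ l, ψ (g l) = 0)
    (hm : Ideal.map ψ (mP p) = IsLocalRing.maximalIdeal R') :
    Ideal.span (Set.range fun j : {j : Fin n // j ∉ Set.range e} => ψ (X j.1 - C (p j.1))) =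
      IsLocalRing.maximalIdeal R' := by
  classical
  set z : Fin n → R' := fun i => ψ (X i - C (p i)) with hz
  set J : Ideal R' := Ideal.span (Set.range fun j : {j : Fin n // j ∉ Set.range e} => z j.1)
    with hJ
  set m : Ideal R' := IsLocalRing.maximalIdeal R' with hmdef
  set c : Fin r → Fin n → k := fun l i => eval p (pderiv i (g l)) with hc
  have hmspan : m = Ideal.span (Set.range z) := by
    rw [← hm, mP_eq_span, Ideal.map_span, ← Set.range_comp]
    rfl
  have hzm : ∀ i, z i ∈ m := fun i => hmspan ▸ Ideal.subset_span ⟨i, rfl⟩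
  -- each Taylor combination lies in m^2
  have hsq : ∀ l, (∑ i : Fin n, ψ (C (c l i)) * z i) ∈ m * m := by
    intro l
    have ht := taylor_mem_sq p (g l)
    rw [h0 l, map_zero, sub_zero] at ht
    have hmem : ψ (g l - ∑ i : Fin n, C (eval p (pderiv i (g l))) * (X i - C (p i)))
        ∈ Ideal.map ψ ((mP p) ^ 2) := Ideal.mem_map_of_mem _ ht
    rw [Ideal.map_pow, hm, pow_two] at hmem
    have := neg_mem hmem
    simpa [map_sub, map_sum, map_mul, hψg l, hz, hc] using this
  -- the partial sums over the columns in S lie in J ⊔ m*m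
  have hwK : ∀ l, (∑ l' : Fin r, ψ (C (c l (e l'))) * z (e l')) ∈ J ⊔ m * m := by
    intro l
    have hsplit := (Finset.sum_filter_add_sum_filter_not Finset.univ
      (fun i => i ∈ Set.range e) (fun i => ψ (C (c l i)) * z i)).symm
    have himage : Finset.univ.filter (fun i => i ∈ Set.range e) = Finset.univ.image e := by
      ext i; simp
    have h1 : (∑ i ∈ Finset.univ.filter (fun i => i ∈ Set.range e), ψ (C (c l i)) * z i) =
        ∑ l' : Fin r, ψ (C (c l (e l'))) * z (e l') := by
      rw [himage, Finset.sum_image (fun a _ b _ h => e.injective h)]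
    have h2 : (∑ i ∈ Finset.univ.filter (fun i => i ∉ Set.range e), ψ (C (c l i)) * z i) ∈ J :=
      Ideal.sum_mem _ fun i hi => Ideal.mul_mem_left _ _
        (Ideal.subset_span ⟨⟨i, (Finset.mem_filter.mp hi).2⟩, rfl⟩)
    have heq : (∑ l' : Fin r, ψ (C (c l (e l'))) * z (e l')) =
        (∑ i : Fin n, ψ (C (c l i)) * z i) -
          (∑ i ∈ Finset.univ.filter (fun i => i ∉ Set.range e), ψ (C (c l i)) * z i) := by
      rw [hsplit, h1]; ring
    rw [heq]
    exact sub_mem (Submodule.mem_sup_right (hsq l)) (Submodule.mem_sup_left h2)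
  -- invert the minor matrix to recover each z (e t)
  set M : Matrix (Fin r) (Fin r) k := Matrix.of fun l l' => c l (e l') with hM
  have hMdet : IsUnit M.det := isUnit_iff_ne_zero.mpr hminor
  have hinv : M⁻¹ * M = 1 := Matrix.nonsing_inv_mul M hMdet
  have hzrec : ∀ t : Fin r, z (e t) =
      ∑ l : Fin r, ψ (C (M⁻¹ t l)) * (∑ l' : Fin r, ψ (C (c l (e l'))) * z (e l')) := by
    intro t
    simp_rw [Finset.mul_sum, ← mul_assoc, ← map_mul ψ, ← map_mul (C : k →+* MvPolynomial (Fin n) k)]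
    rw [Finset.sum_comm]
    have key : ∀ y : Fin r, (∑ x : Fin r,
        ψ (C (M⁻¹ t x * c x (e y))) * z (e y)) =
        ψ (C ((M⁻¹ * M) t y)) * z (e y) := by
      intro y
      rw [← Finset.sum_mul, ← map_sum, ← map_sum, Matrix.mul_apply]
      rfl
    simp only [key, hinv, Matrix.one_apply]
    simp [apply_ite (C : k →+* MvPolynomial (Fin n) k), apply_ite ψ, ite_mul,
      Finset.sum_ite_eq, hz]
  have hzK : ∀ i, z i ∈ J ⊔ m * m := by
    intro i
    by_cases hi : i ∈ Set.range e
    · obtain ⟨t, rfl⟩ := hi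
      rw [hzrec t]
      exact Ideal.sum_mem _ fun l _ => Ideal.mul_mem_left _ _ (hwK l)
    · exact Submodule.mem_sup_left (Ideal.subset_span ⟨⟨i, hi⟩, rfl⟩)
  apply le_antisymm
  · rw [hJ, Ideal.span_le]
    rintro _ ⟨j, rfl⟩
    exact hzm j.1
  · refine Submodule.le_of_le_smul_of_le_jacobson_bot (IsNoetherian.noetherian _)
      (IsLocalRing.jacobson_eq_maximalIdeal ⊥ bot_ne_top).ge ?_
    rw [smul_eq_mul]
    conv_lhs => rw [hmspan]
    rw [Ideal.span_le]
    rintro _ ⟨i, rfl⟩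
    exact hzK i

set_option maxHeartbeats 1000000 in
set_option synthInstance.maxHeartbeats 1000000 in
/-- If `W = V(g_1,…,g_r)` is a non-singular complete intersection of codimension `r` at `p`
and the `r × r` minor of the Jacobian matrix on the columns `S = range e` is nonzero at `p`,
then the images of the `n - r` elements `{x_j - p_j : j ∉ S}` generate the maximal ideal of
the local ring of `W` at `p`, i.e. they form a regular system of parameters. -/
theorem regular_system_of_parameters_from_minor {k : Type} [Field k] {n r : ℕ}
    (g : Fin r → MvPolynomial (Fin n) k) (p : Fin n → k)
    (h0 : ∀ l, eval p (g l) = 0) (e : Fin r ↪ Fin n)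
    (hminor : (Matrix.of fun l l' : Fin r => eval p (pderiv (e l') (g l))).det ≠ 0) :
    letI hle : Ideal.span (Set.range g) ≤ mP p :=
      Ideal.span_le.mpr (Set.range_subset_iff.mpr fun l => RingHom.mem_ker.mpr (h0 l))
    letI := (qP_isMaximal p (Ideal.span (Set.range g)) hle).isPrime
    (IsRegularLocal (Localization.AtPrime
        (Ideal.map (Ideal.Quotient.mk (Ideal.span (Set.range g))) (mP p))) →
      ringKrullDim (Localization.AtPrime
          (Ideal.map (Ideal.Quotient.mk (Ideal.span (Set.range g))) (mP p))) =
        ((n - r : ℕ) : WithBot ℕ∞) →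
      Ideal.span (Set.range fun j : {j : Fin n // j ∉ Set.range e} =>
          algebraMap (MvPolynomial (Fin n) k ⧸ Ideal.span (Set.range g))
            (Localization.AtPrime
              (Ideal.map (Ideal.Quotient.mk (Ideal.span (Set.range g))) (mP p)))
            (Ideal.Quotient.mk (Ideal.span (Set.range g)) (X j.1 - C (p j.1)))) =
        IsLocalRing.maximalIdeal (Localization.AtPrime
          (Ideal.map (Ideal.Quotient.mk (Ideal.span (Set.range g))) (mP p)))) := by
  intro hreg hdim
  clear hreg hdim
  have hle : Ideal.span (Set.range g) ≤ mP p :=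
    Ideal.span_le.mpr (Set.range_subset_iff.mpr fun l => RingHom.mem_ker.mpr (h0 l))
  haveI := (qP_isMaximal p (Ideal.span (Set.range g)) hle).isPrime
  haveI : IsNoetherianRing (Localization.AtPrime
      (Ideal.map (Ideal.Quotient.mk (Ideal.span (Set.range g))) (mP p))) :=
    IsLocalization.isNoetherianRing
      (Ideal.map (Ideal.Quotient.mk (Ideal.span (Set.range g))) (mP p)).primeCompl _
      inferInstance
  have key := span_compl_eq_maximalIdeal g p h0 e hminor (R' := Localization.AtPrime
        (Ideal.map (Ideal.Quotient.mk (Ideal.span (Set.range g))) (mP p)))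
    ((algebraMap (MvPolynomial (Fin n) k ⧸ Ideal.span (Set.range g))
        (Localization.AtPrime
          (Ideal.map (Ideal.Quotient.mk (Ideal.span (Set.range g))) (mP p)))).comp
      (Ideal.Quotient.mk (Ideal.span (Set.range g))))
    (fun l => by
      rw [RingHom.comp_apply, Ideal.Quotient.eq_zero_iff_mem.mpr
        (Ideal.subset_span (Set.mem_range_self l)), map_zero])
    (by rw [← Ideal.map_map]; exact Localization.AtPrime.map_eq_maximalIdeal)
  exact key
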